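/- ∫₀¹ (1/(1+x)) · Li₂((1-x)/2) dx = π²/12 · ln 2 - (ln 2)³/6 - ζ(3)/4. -/

import Mathlib

open Real Filter Topology Set

noncomputable def Li2 (z : ℝ) : ℝ := ∑' n : ℕ, z ^ (n + 1) / ((n : ℝ) + 1) ^ 2

noncomputable def Li3 (z : ℝ) : ℝ := ∑' n : ℕ, z ^ (n + 1) / ((n : ℝ) + 1) ^ 3

lemma summable_inv_sq : Summable (fun n : ℕ => 1 / ((n : ℝ) + 1) ^ 2) := by
  have h := (summable_one_div_nat_pow (p := 2)).mpr one_lt_two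
  have := (summable_nat_add_iff (f := fun n : ℕ => 1 / (n : ℝ) ^ 2) 1).mpr h
  refine this.congr fun n => by push_cast; ring_nf

lemma summable_inv_cube : Summable (fun n : ℕ => 1 / ((n : ℝ) + 1) ^ 3) := by
  have h := (summable_one_div_nat_pow (p := 3)).mpr (by norm_num)
  have := (summable_nat_add_iff (f := fun n : ℕ => 1 / (n : ℝ) ^ 3) 1).mpr h
  refine this.congr fun n => by push_cast; ring_nf

lemma np1_pos (n : ℕ) : (0:ℝ) < (n : ℝ) + 1 := by positivity

lemma term_bound2 {z : ℝ} (hz : |z| ≤ 1) (n : ℕ) :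
    |z ^ (n + 1) / ((n : ℝ) + 1) ^ 2| ≤ 1 / ((n : ℝ) + 1) ^ 2 := by
  rw [abs_div, abs_pow, abs_of_pos (by positivity : (0:ℝ) < ((n:ℝ)+1)^2)]
  gcongr
  exact pow_le_one₀ (abs_nonneg z) hz

lemma term_bound3 {z : ℝ} (hz : |z| ≤ 1) (n : ℕ) :
    |z ^ (n + 1) / ((n : ℝ) + 1) ^ 3| ≤ 1 / ((n : ℝ) + 1) ^ 2 := by
  rw [abs_div, abs_pow, abs_of_pos (by positivity : (0:ℝ) < ((n:ℝ)+1)^3)]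
  have h1 : |z| ^ (n+1) ≤ 1 := pow_le_one₀ (abs_nonneg z) hz
  have h2 : ((n:ℝ)+1)^2 ≤ ((n:ℝ)+1)^3 := by
    have := np1_pos n
    exact pow_le_pow_right₀ (by linarith) (by norm_num)
  calc |z| ^ (n+1) / ((n:ℝ)+1)^3 ≤ 1 / ((n:ℝ)+1)^3 := by
        gcongr
    _ ≤ 1 / ((n:ℝ)+1)^2 := one_div_le_one_div_of_le (by positivity) h2
    
lemma summable_li2 {z : ℝ} (hz : |z| ≤ 1) :
    Summable (fun n : ℕ => z ^ (n + 1) / ((n : ℝ) + 1) ^ 2) :=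
  Summable.of_abs (summable_inv_sq.of_nonneg_of_le (fun _ => abs_nonneg _) (term_bound2 hz))

lemma summable_li3 {z : ℝ} (hz : |z| ≤ 1) :
    Summable (fun n : ℕ => z ^ (n + 1) / ((n : ℝ) + 1) ^ 3) :=
  Summable.of_abs (summable_inv_sq.of_nonneg_of_le (fun _ => abs_nonneg _) (term_bound3 hz))

lemma li2_continuousOn : ContinuousOn Li2 (Icc (-1:ℝ) 1) := by
  apply continuousOn_tsum (u := fun n : ℕ => 1 / ((n : ℝ) + 1) ^ 2)
  · intro i; exact (by fun_prop : Continuous fun z : ℝ => z ^ (i+1) / ((i:ℝ)+1)^2).continuousOn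
  · exact summable_inv_sq
  · intro n x hx
    exact term_bound2 (abs_le.mpr ⟨hx.1, hx.2⟩) n

lemma li3_continuousOn : ContinuousOn Li3 (Icc (-1:ℝ) 1) := by
  apply continuousOn_tsum (u := fun n : ℕ => 1 / ((n : ℝ) + 1) ^ 2)
  · intro i; exact (by fun_prop : Continuous fun z : ℝ => z ^ (i+1) / ((i:ℝ)+1)^3).continuousOn
  · exact summable_inv_sq
  · intro n x hx
    exact term_bound3 (abs_le.mpr ⟨hx.1, hx.2⟩) n

lemma li2_zero : Li2 0 = 0 := by simp [Li2]

lemma li3_zero : Li3 0 = 0 := by simp [Li3]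

lemma li2_one : Li2 1 = π ^ 2 / 6 := by
  have h := hasSum_zeta_two
  have h := (hasSum_nat_add_iff' (f := fun n : ℕ => (1:ℝ) / (n : ℝ) ^ 2) 1).mpr h
  simp only [Finset.range_one, Finset.sum_singleton, Nat.cast_zero] at h
  norm_num at h
  have h2 : HasSum (fun n : ℕ => (1:ℝ) ^ (n+1) / ((n:ℝ) + 1) ^ 2) (π ^ 2 / 6) := by
    refine h.congr_fun fun n => by norm_num
  exact h2.tsum_eq

lemma li3_one : Li3 1 = ∑' n : ℕ, 1 / ((n : ℝ) + 1) ^ 3 := by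
  unfold Li3; congr 1; funext n; norm_num

section deriv

lemma hasDerivAt_series {t : ℝ} (ht : |t| < 1) {k : ℕ} (hk : 1 ≤ k) :
    HasDerivAt (fun z : ℝ => ∑' n : ℕ, z ^ (n + 1) / ((n : ℝ) + 1) ^ k)
      (∑' n : ℕ, t ^ n / ((n : ℝ) + 1) ^ (k - 1)) t := by
  set r : ℝ := (1 + |t|) / 2 with hr
  have hr1 : r < 1 := by rw [hr]; linarith
  have htr : |t| < r := by rw [hr]; linarith [abs_nonneg t]
  have hr0 : (0:ℝ) ≤ r := by positivity
  have key := hasDerivAt_tsum_of_isPreconnected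
    (u := fun n : ℕ => ((n:ℝ) + 1) * r ^ n)
    (g := fun (n : ℕ) (z : ℝ) => z ^ (n + 1) / ((n : ℝ) + 1) ^ k)
    (g' := fun (n : ℕ) (y : ℝ) => (((n:ℕ) + 1 : ℝ) * y ^ n) / ((n : ℝ) + 1) ^ k)
    (y₀ := (0:ℝ)) (y := t) (t := Metric.ball (0:ℝ) r)
    ?_ Metric.isOpen_ball (convex_ball 0 r).isPreconnected ?_ ?_ ?_ ?_ ?_
  · have heq : (∑' n : ℕ, ((((n:ℕ) + 1 : ℝ)) * t ^ n) / ((n : ℝ) + 1) ^ k)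
        = ∑' n : ℕ, t ^ n / ((n : ℝ) + 1) ^ (k - 1) := by
      obtain ⟨m, rfl⟩ : ∃ m, k = m + 1 := ⟨k - 1, by omega⟩
      refine tsum_congr fun n => ?_
      have ha := (np1_pos n).ne'
      rw [Nat.add_sub_cancel, pow_succ', mul_div_mul_left _ _ ha]
    rw [heq] at key
    exact key
  · have h1 : Summable (fun n : ℕ => (n:ℝ) ^ 1 * r ^ n) :=
      summable_pow_mul_geometric_of_norm_lt_one 1 (by rwa [Real.norm_eq_abs, abs_of_nonneg hr0])
    have h2 : Summable (fun n : ℕ => r ^ n) := summable_geometric_of_lt_one hr0 hr1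
    exact (h1.add h2).congr fun n => by push_cast; ring
  · intro n y _
    have h := (hasDerivAt_pow (n + 1) y).div_const (((n : ℝ) + 1) ^ k)
    refine h.congr_deriv ?_
    push_cast [Nat.add_sub_cancel]
    ring
  · intro n y hy
    have hyr : |y| ≤ r := by
      have h0 := mem_ball_zero_iff.mp hy
      rw [Real.norm_eq_abs] at h0
      exact h0.le
    have h1 : (1:ℝ) ≤ ((n:ℝ)+1)^k := one_le_pow₀ (by linarith [np1_pos n])
    have habs : ‖(((n:ℕ) + 1 : ℝ) * y ^ n) / ((n : ℝ) + 1) ^ k‖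
        = (((n:ℝ) + 1) * |y| ^ n) / ((n : ℝ) + 1) ^ k := by
      rw [Real.norm_eq_abs, abs_div, abs_mul, abs_pow, abs_pow,
        abs_of_pos (np1_pos n)]
    rw [habs]
    calc (((n:ℝ) + 1) * |y| ^ n) / ((n : ℝ) + 1) ^ k
        ≤ (((n:ℝ) + 1) * r ^ n) / 1 := by
          gcongr
      _ = ((n:ℝ) + 1) * r ^ n := div_one _
  · exact Metric.mem_ball_self (by positivity)
  · exact summable_zero.congr fun n => by simp
  · exact mem_ball_zero_iff.mpr (by rwa [Real.norm_eq_abs])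

lemma log_series {t : ℝ} (ht : |t| < 1) (ht0 : t ≠ 0) :
    (∑' n : ℕ, t ^ n / ((n : ℝ) + 1)) = -Real.log (1 - t) / t := by
  have hls := hasSum_pow_div_log_of_abs_lt_one ht
  have h2 : HasSum (fun n : ℕ => t * (t ^ n / ((n:ℝ) + 1))) (t * (-Real.log (1 - t) / t)) := by
    have : t * (-Real.log (1 - t) / t) = -Real.log (1 - t) := by field_simp
    rw [this]
    refine hls.congr_fun fun n => by push_cast; ring
  exact ((hasSum_mul_left_iff ht0).mp h2).tsum_eq

lemma li2_hasDerivAt {t : ℝ} (ht : |t| < 1) (ht0 : t ≠ 0) :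
    HasDerivAt Li2 (-Real.log (1 - t) / t) t := by
  have h := hasDerivAt_series ht (k := 2) (by norm_num)
  rw [show (2-1 : ℕ) = 1 from rfl] at h
  simp only [pow_one] at h
  rw [log_series ht ht0] at h
  exact h

lemma li3_hasDerivAt {t : ℝ} (ht : |t| < 1) (ht0 : t ≠ 0) :
    HasDerivAt Li3 (Li2 t / t) t := by
  have h := hasDerivAt_series ht (k := 3) (by norm_num)
  rw [show (3-1 : ℕ) = 2 from rfl] at h
  have hsum : HasSum (fun n : ℕ => t * (t ^ n / ((n:ℝ) + 1) ^ 2)) (t * (Li2 t / t)) := by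
    have : t * (Li2 t / t) = Li2 t := by field_simp
    rw [this]
    refine (summable_li2 ht.le).hasSum.congr_fun fun n => by push_cast; ring
  rw [((hasSum_mul_left_iff ht0).mp hsum).tsum_eq] at h
  exact h

end deriv

/-- If `f` is continuous on `[a,b]` and has zero derivative on `(a,b)`, then `f b = f a`. -/
lemma eq_of_deriv_zero {f : ℝ → ℝ} {a b : ℝ} (hab : a < b)
    (hcont : ContinuousOn f (Icc a b))
    (hderiv : ∀ x ∈ Ioo a b, HasDerivAt f 0 x) : f b = f a := by
  set m := (a + b) / 2 with hm
  have ham : a < m := by rw [hm]; linarith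
  have hmb : m < b := by rw [hm]; linarith
  -- right half : f b = f m
  have hright : f b = f m := by
    have := constant_of_has_deriv_right_zero (f := f) (a := m) (b := b)
      (hcont.mono (Icc_subset_Icc ham.le le_rfl)) ?_ b (right_mem_Icc.mpr hmb.le)
    · exact this
    · intro x hx
      exact (hderiv x ⟨lt_of_lt_of_le ham hx.1, hx.2⟩).hasDerivWithinAt
  -- left half, reflected : f a = f m
  have hleft : f a = f m := by
    set g : ℝ → ℝ := fun x => f (a + m - x) with hg
    have hmaps : MapsTo (fun x : ℝ => a + m - x) (Icc a m) (Icc a m) := by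
      intro x hx
      simp only [mem_Icc] at hx ⊢
      constructor <;> linarith [hx.1, hx.2]
    have hgcont : ContinuousOn g (Icc a m) := by
      apply hcont.mono (Icc_subset_Icc le_rfl hmb.le) |>.comp
        (Continuous.continuousOn (by continuity)) hmaps
    have := constant_of_has_deriv_right_zero (f := g) (a := a) (b := m) hgcont ?_ m
      (right_mem_Icc.mpr ham.le)
    · simpa [hg] using this
    · intro x hx
      have hx' : a + m - x ∈ Ioo a b := by
        constructor <;> simp only [mem_Ico] at hx
        · linarith [hx.2]
        · linarith [hx.1]
      have hd : HasDerivAt g (0 * (0 - 1)) x :=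
        (hderiv _ hx').comp x (((hasDerivAt_const x (a + m)).sub (hasDerivAt_id x)))
      simpa using hd.hasDerivWithinAt
  rw [hright, hleft]

lemma abs_log_one_sub_le {x : ℝ} (h0 : 0 ≤ x) (h : x ≤ 1/2) : |log (1 - x)| ≤ 2 * x := by
  have h1 : (0:ℝ) < 1 - x := by linarith
  have hle : log (1 - x) ≤ 0 := log_nonpos (by linarith) (by linarith)
  rw [abs_of_nonpos hle]
  have h2 : -log (1 - x) = log (1 / (1 - x)) := by
    rw [log_div one_ne_zero h1.ne', log_one]; ring
  have h3 : log (1 / (1 - x)) ≤ 1 / (1 - x) - 1 := log_le_sub_one_of_pos (by positivity)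
  have h4 : 1 / (1 - x) - 1 = x / (1 - x) := by field_simp; ring
  have h5 : x / (1 - x) ≤ 2 * x := by
    rw [div_le_iff₀ h1]
    nlinarith
  linarith [h2 ▸ h3, h4 ▸ h3]

-- Li3 (-1)
set_option maxHeartbeats 1000000 in
lemma li3_neg_one : Li3 (-1) = -(3/4) * ∑' n : ℕ, 1 / ((n : ℝ) + 1) ^ 3 := by
  set S := ∑' n : ℕ, 1 / ((n : ℝ) + 1) ^ 3 with hS
  have hsum : Summable (fun n : ℕ => (-1:ℝ) ^ (n+1) / ((n:ℝ)+1)^3) := summable_li3 (by norm_num)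
  -- h : S + Li3 (-1) = (1/4) * S
  have hadd : HasSum (fun n : ℕ => 1 / ((n : ℝ) + 1) ^ 3 + (-1:ℝ) ^ (n+1) / ((n:ℝ)+1)^3)
      (S + Li3 (-1)) := summable_inv_cube.hasSum.add hsum.hasSum
  have heven : ∀ k : ℕ, (fun n : ℕ => 1 / ((n : ℝ) + 1) ^ 3 + (-1:ℝ) ^ (n+1) / ((n:ℝ)+1)^3) (2*k) = 0 := by
    intro k
    have : (-1:ℝ) ^ (2*k+1) = -1 := by
      rw [pow_succ, pow_mul]
      norm_num
    simp [this]
    push_cast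
    ring
  have hodd : ∀ k : ℕ, (fun n : ℕ => 1 / ((n : ℝ) + 1) ^ 3 + (-1:ℝ) ^ (n+1) / ((n:ℝ)+1)^3) (2*k+1)
      = (1/4) * (1 / ((k:ℝ)+1)^3) := by
    intro k
    have h1 : (-1:ℝ) ^ (2*k+1+1) = 1 := by
      rw [pow_succ, pow_succ, pow_mul]
      norm_num
    simp only [h1]
    push_cast
    field_simp
    ring
  have hsum2 : Summable (fun n : ℕ => 1 / ((n : ℝ) + 1) ^ 3 + (-1:ℝ) ^ (n+1) / ((n:ℝ)+1)^3) :=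
    summable_inv_cube.add hsum
  have he : HasSum (fun k : ℕ => (fun n : ℕ => 1 / ((n : ℝ) + 1) ^ 3 + (-1:ℝ) ^ (n+1) / ((n:ℝ)+1)^3) (2*k)) 0 := by
    simp only [heven]
    exact hasSum_zero
  have ho : HasSum (fun k : ℕ => (fun n : ℕ => 1 / ((n : ℝ) + 1) ^ 3 + (-1:ℝ) ^ (n+1) / ((n:ℝ)+1)^3) (2*k+1))
      ((1/4) * S) := by
    have h := summable_inv_cube.hasSum.mul_left (1/4)
    exact h.congr_fun fun k => hodd k
  have key := HasSum.even_add_odd (f := fun n : ℕ => 1 / ((n : ℝ) + 1) ^ 3 + (-1:ℝ) ^ (n+1) / ((n:ℝ)+1)^3) he ho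
  have huniq := hadd.unique key
  linarith

-- derivative of 1 - z
lemma hasDerivAt_one_sub (y : ℝ) : HasDerivAt (fun z : ℝ => 1 - z) (-1) y := by
  simpa using (hasDerivAt_id y).const_sub (1:ℝ)

-- derivative of -z/(1-z)
lemma hasDerivAt_u {y : ℝ} (hy : (1:ℝ) - y ≠ 0) :
    HasDerivAt (fun z : ℝ => -z / (1 - z)) (-((1 - y)^2)⁻¹) y := by
  have h := ((hasDerivAt_id y).neg).div (hasDerivAt_one_sub y) hy
  refine h.congr_deriv ?_
  simp only [Pi.neg_apply, id_eq]
  field_simp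
  ring

lemma u_mem {y : ℝ} (h0 : 0 ≤ y) (h2 : y ≤ 1/2) : -y / (1 - y) ∈ Icc (-1:ℝ) 0 := by
  have h1 : (0:ℝ) < 1 - y := by linarith
  constructor
  · rw [neg_div, neg_le, neg_neg, div_le_one h1]
    linarith
  · apply div_nonpos_of_nonpos_of_nonneg <;> linarith

lemma contOn_u : ContinuousOn (fun y : ℝ => -y / (1 - y)) (Icc (0:ℝ) (1/2)) := by
  apply ContinuousOn.div (by fun_prop) (by fun_prop)
  intro y hy
  simp only [mem_Icc] at hy
  intro h
  linarith [hy.2]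

lemma contOn_li2_comp {g : ℝ → ℝ} {s : Set ℝ} (hg : ContinuousOn g s)
    (h : ∀ x ∈ s, g x ∈ Icc (-1:ℝ) 1) : ContinuousOn (fun x => Li2 (g x)) s :=
  li2_continuousOn.comp hg h

lemma contOn_li3_comp {g : ℝ → ℝ} {s : Set ℝ} (hg : ContinuousOn g s)
    (h : ∀ x ∈ s, g x ∈ Icc (-1:ℝ) 1) : ContinuousOn (fun x => Li3 (g x)) s :=
  li3_continuousOn.comp hg h

-- the squeeze at 0 for  log y * log (1-y)
lemma tendsto_log_mul_log : Tendsto (fun y : ℝ => log y * log (1 - y))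
    (𝓝[Icc (0:ℝ) (1/2)] 0) (𝓝 0) := by
  apply squeeze_zero_norm' (a := fun y : ℝ => 2 * |y * log y|)
  · filter_upwards [self_mem_nhdsWithin] with y hy
    simp only [mem_Icc] at hy
    calc ‖log y * log (1 - y)‖ = |log y| * |log (1 - y)| := by
          rw [Real.norm_eq_abs, abs_mul]
      _ ≤ |log y| * (2 * y) := by
          gcongr
          exact abs_log_one_sub_le hy.1 hy.2
      _ = 2 * |y * log y| := by
          rw [abs_mul, abs_of_nonneg hy.1]
          ring
  · have hc : Continuous (fun y : ℝ => 2 * |y * log y|) :=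
      continuous_const.mul continuous_mul_log.abs
    have h := (hc.tendsto 0).mono_left (nhdsWithin_le_nhds (s := Icc (0:ℝ) (1/2)))
    simpa using h

-- reflection identity
lemma li2_reflection {x : ℝ} (hx : x ∈ Icc (0:ℝ) (1/2)) :
    Li2 x + Li2 (1 - x) + log x * log (1 - x) = π ^ 2 / 6 := by
  have hf0 : Li2 0 + Li2 (1 - 0) + log 0 * log (1 - 0) = π ^ 2 / 6 := by
    simp [li2_zero, li2_one]
  have hcont : ContinuousOn (fun y => Li2 y + Li2 (1 - y) + log y * log (1 - y))
      (Icc (0:ℝ) (1/2)) := by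
    apply ContinuousOn.add
    apply ContinuousOn.add
    · exact contOn_li2_comp continuousOn_id (fun y hy => by
        simp only [mem_Icc] at hy ⊢; constructor <;> linarith [hy.1, hy.2])
    · exact contOn_li2_comp (by fun_prop) (fun y hy => by
        simp only [mem_Icc] at hy ⊢; constructor <;> linarith [hy.1, hy.2])
    · -- log y * log (1 - y)
      intro z hz
      rcases eq_or_lt_of_le hz.1 with h0 | h0
      · -- z = 0
        rw [← h0]
        unfold ContinuousWithinAt
        have h00 : (fun x : ℝ => log x * log (1 - x)) 0 = 0 := by norm_num
        rw [h00]
        exact tendsto_log_mul_log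
      · have h1 : (1:ℝ) - z ≠ 0 := by have := hz.2; intro h; simp only [mem_Icc] at hz; linarith [hz.2]
        exact (((Real.continuousAt_log h0.ne').mul
          ((Real.continuousAt_log h1).comp ((continuous_const.sub continuous_id).continuousAt))) :
            ContinuousAt _ z).continuousWithinAt
  have hderiv : ∀ y ∈ Ioo (0:ℝ) (1/2), HasDerivAt
      (fun y => Li2 y + Li2 (1 - y) + log y * log (1 - y)) 0 y := by
    intro y hy
    obtain ⟨hy0, hy2⟩ := hy
    have hy0' : y ≠ 0 := hy0.ne'
    have h1y : (0:ℝ) < 1 - y := by linarith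
    have h1y' : (1:ℝ) - y ≠ 0 := h1y.ne'
    have habs : |y| < 1 := by rw [abs_of_pos hy0]; linarith
    have habs2 : |1 - y| < 1 := by rw [abs_of_pos h1y]; linarith
    have d1 := li2_hasDerivAt habs hy0'
    have d2 : HasDerivAt (fun z => Li2 (1 - z)) (-log (1 - (1 - y)) / (1 - y) * (-1)) y :=
      (li2_hasDerivAt habs2 h1y').comp y (hasDerivAt_one_sub y)
    have dl2 : HasDerivAt (fun z : ℝ => log (1 - z)) ((1 - y)⁻¹ * (-1)) y :=
      (Real.hasDerivAt_log h1y').comp y (hasDerivAt_one_sub y)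
    have d3 := (Real.hasDerivAt_log hy0').mul dl2
    have dd := (d1.add d2).add d3
    refine dd.congr_deriv ?_
    rw [show (1:ℝ) - (1 - y) = y by ring]
    field_simp
    ring
  rcases eq_or_lt_of_le hx.1 with h0 | h0
  · rw [← h0]; simpa using hf0
  · have key := eq_of_deriv_zero h0 (hcont.mono (Icc_subset_Icc le_rfl hx.2))
      (fun y hy => hderiv y ⟨hy.1, lt_of_lt_of_le hy.2 hx.2⟩)
    rw [key]
    simpa using hf0

lemma li2_half : Li2 (1/2) = π ^ 2 / 12 - (log 2) ^ 2 / 2 := by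
  have h := li2_reflection (x := 1/2) (by norm_num)
  rw [show (1:ℝ) - 1/2 = 1/2 by norm_num] at h
  rw [show (1:ℝ)/2 = 2⁻¹ by norm_num, Real.log_inv] at h
  nlinarith [h]

lemma li2_landen {x : ℝ} (hx : x ∈ Icc (0:ℝ) (1/2)) :
    Li2 (-x / (1 - x)) = -Li2 x - (log (1 - x)) ^ 2 / 2 := by
  have hf0 : Li2 (-(0:ℝ) / (1 - 0)) + Li2 0 + (log (1 - 0)) ^ 2 / 2 = 0 := by
    simp [li2_zero]
  have hcont : ContinuousOn (fun y => Li2 (-y / (1 - y)) + Li2 y + (log (1 - y)) ^ 2 / 2)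
      (Icc (0:ℝ) (1/2)) := by
    apply ContinuousOn.add
    apply ContinuousOn.add
    · exact contOn_li2_comp contOn_u (fun y hy => ⟨(u_mem hy.1 hy.2).1,
        le_trans (u_mem hy.1 hy.2).2 zero_le_one⟩)
    · exact contOn_li2_comp continuousOn_id (fun y hy => by
        simp only [mem_Icc] at hy ⊢; constructor <;> linarith [hy.1, hy.2])
    · intro z hz
      have h1 : (1:ℝ) - z ≠ 0 := by simp only [mem_Icc] at hz; intro h; linarith [hz.2]
      exact ((((Real.continuousAt_log h1).comp
        ((continuous_const.sub continuous_id).continuousAt)).pow 2).div_const 2).continuousWithinAt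
  have hderiv : ∀ y ∈ Ioo (0:ℝ) (1/2),
      HasDerivAt (fun y => Li2 (-y / (1 - y)) + Li2 y + (log (1 - y)) ^ 2 / 2) 0 y := by
    intro y hy
    obtain ⟨hy0, hy2⟩ := hy
    have h1y : (0:ℝ) < 1 - y := by linarith
    have habs : |y| < 1 := by rw [abs_of_pos hy0]; linarith
    have hu_lt : |(-y / (1 - y))| < 1 := by
      rw [abs_div, abs_neg, abs_of_pos hy0, abs_of_pos h1y, div_lt_one h1y]
      linarith
    have hu0 : -y / (1 - y) ≠ 0 := div_ne_zero (neg_ne_zero.mpr hy0.ne') h1y.ne'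
    have d0 := (li2_hasDerivAt hu_lt hu0).comp y (hasDerivAt_u h1y.ne')
    have d1 := li2_hasDerivAt habs hy0.ne'
    have dl2 : HasDerivAt (fun z : ℝ => log (1 - z)) ((1 - y)⁻¹ * (-1)) y :=
      (Real.hasDerivAt_log h1y.ne').comp y (hasDerivAt_one_sub y)
    have d2 := (dl2.pow 2).div_const 2
    have dd := (d0.add d1).add d2
    refine dd.congr_deriv ?_
    have h1mu : 1 - (-y / (1 - y)) = (1 - y)⁻¹ := by field_simp; ring
    rw [h1mu, Real.log_inv]
    field_simp
    ring
  have key : Li2 (-x / (1 - x)) + Li2 x + (log (1 - x)) ^ 2 / 2 = 0 := by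
    rcases eq_or_lt_of_le hx.1 with h0 | h0
    · rw [← h0]; simpa using hf0
    · have key := eq_of_deriv_zero h0 (hcont.mono (Icc_subset_Icc le_rfl hx.2))
        (fun y hy => hderiv y ⟨hy.1, lt_of_lt_of_le hy.2 hx.2⟩)
      rw [key]
      simpa using hf0
  linarith [key]

lemma tendsto_sq_log : Tendsto (fun y : ℝ => (log (1 - y)) ^ 2 * log y / 2)
    (𝓝[Icc (0:ℝ) (1/2)] 0) (𝓝 0) := by
  apply squeeze_zero_norm' (a := fun y : ℝ => |y * log y|)
  · filter_upwards [self_mem_nhdsWithin] with y hy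
    simp only [mem_Icc] at hy
    have hy1 := hy.1
    have hy2 := hy.2
    have hb := abs_log_one_sub_le hy1 hy2
    calc ‖(log (1 - y)) ^ 2 * log y / 2‖ = |log (1 - y)| ^ 2 * |log y| / 2 := by
          rw [Real.norm_eq_abs, abs_div, abs_mul, abs_pow, abs_two]
      _ ≤ (2 * y) ^ 2 * |log y| / 2 := by gcongr
      _ = (2 * y) * (y * |log y|) := by ring
      _ ≤ 1 * (y * |log y|) := by
          have : y * |log y| ≥ 0 := by positivity
          nlinarith
      _ = |y * log y| := by rw [one_mul, abs_mul, abs_of_nonneg hy1]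
  · have h := (continuous_mul_log.abs.tendsto 0).mono_left
      (nhdsWithin_le_nhds (s := Icc (0:ℝ) (1/2)))
    simpa using h

lemma li3_landen {x : ℝ} (hx : x ∈ Icc (0:ℝ) (1/2)) :
    Li3 x + Li3 (1 - x) + Li3 (-x / (1 - x))
      = (∑' n : ℕ, 1 / ((n : ℝ) + 1) ^ 3) + (log (1 - x)) ^ 3 / 6
        + π ^ 2 / 6 * log (1 - x) - (log (1 - x)) ^ 2 * log x / 2 := by
  set Z := ∑' n : ℕ, 1 / ((n : ℝ) + 1) ^ 3 with hZ
  have hf0 : Li3 0 + Li3 (1 - 0) + Li3 (-(0:ℝ) / (1 - 0)) - (log (1 - 0)) ^ 3 / 6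
      - π ^ 2 / 6 * log (1 - 0) + (log (1 - 0)) ^ 2 * log 0 / 2 = Z := by
    rw [hZ]
    simp [li3_zero, li3_one, one_div]
  have hcont : ContinuousOn (fun y => Li3 y + Li3 (1 - y) + Li3 (-y / (1 - y))
      - (log (1 - y)) ^ 3 / 6 - π ^ 2 / 6 * log (1 - y) + (log (1 - y)) ^ 2 * log y / 2)
      (Icc (0:ℝ) (1/2)) := by
    have hlog : ∀ z ∈ Icc (0:ℝ) (1/2), ContinuousWithinAt (fun y : ℝ => log (1 - y))
        (Icc (0:ℝ) (1/2)) z := by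
      intro z hz
      have h1 : (1:ℝ) - z ≠ 0 := by simp only [mem_Icc] at hz; intro h; linarith [hz.2]
      exact ((Real.continuousAt_log h1).comp
        ((continuous_const.sub continuous_id).continuousAt)).continuousWithinAt
    apply ContinuousOn.add
    apply ContinuousOn.sub
    apply ContinuousOn.sub
    apply ContinuousOn.add
    apply ContinuousOn.add
    · exact contOn_li3_comp continuousOn_id (fun y hy => by
        simp only [mem_Icc] at hy ⊢; constructor <;> linarith [hy.1, hy.2])
    · exact contOn_li3_comp (by fun_prop) (fun y hy => by
        simp only [mem_Icc] at hy ⊢; constructor <;> linarith [hy.1, hy.2])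
    · exact contOn_li3_comp contOn_u (fun y hy => ⟨(u_mem hy.1 hy.2).1,
        le_trans (u_mem hy.1 hy.2).2 zero_le_one⟩)
    · exact fun z hz => (((hlog z hz).pow 3).div_const 6)
    · exact fun z hz => (hlog z hz).const_smul (π ^ 2 / 6) |>.congr (fun w _ => by simp [smul_eq_mul]) (by simp [smul_eq_mul])
    · -- (log (1-y))^2 * log y / 2
      intro z hz
      rcases eq_or_lt_of_le hz.1 with h0 | h0
      · rw [← h0]
        unfold ContinuousWithinAt
        have h00 : (fun y : ℝ => (log (1 - y)) ^ 2 * log y / 2) 0 = 0 := by norm_num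
        rw [h00]
        exact tendsto_sq_log
      · have h1 : (1:ℝ) - z ≠ 0 := by simp only [mem_Icc] at hz; intro h; linarith [hz.2]
        exact ((((hlog z hz).pow 2).mul (Real.continuousAt_log h0.ne').continuousWithinAt).div_const 2)
  have hderiv : ∀ y ∈ Ioo (0:ℝ) (1/2),
      HasDerivAt (fun y => Li3 y + Li3 (1 - y) + Li3 (-y / (1 - y))
        - (log (1 - y)) ^ 3 / 6 - π ^ 2 / 6 * log (1 - y)
        + (log (1 - y)) ^ 2 * log y / 2) 0 y := by
    intro y hy
    obtain ⟨hy0, hy2⟩ := hy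
    have h1y : (0:ℝ) < 1 - y := by linarith
    have habs : |y| < 1 := by rw [abs_of_pos hy0]; linarith
    have habs2 : |1 - y| < 1 := by rw [abs_of_pos h1y]; linarith
    have hu_lt : |(-y / (1 - y))| < 1 := by
      rw [abs_div, abs_neg, abs_of_pos hy0, abs_of_pos h1y, div_lt_one h1y]
      linarith
    have hu0 : -y / (1 - y) ≠ 0 := div_ne_zero (neg_ne_zero.mpr hy0.ne') h1y.ne'
    have d1 := li3_hasDerivAt habs hy0.ne'
    have d2 := (li3_hasDerivAt habs2 h1y.ne').comp y (hasDerivAt_one_sub y)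
    have d3 := (li3_hasDerivAt hu_lt hu0).comp y (hasDerivAt_u h1y.ne')
    have dl2 : HasDerivAt (fun z : ℝ => log (1 - z)) ((1 - y)⁻¹ * (-1)) y :=
      (Real.hasDerivAt_log h1y.ne').comp y (hasDerivAt_one_sub y)
    have d4 := (dl2.pow 3).div_const 6
    have d5 := dl2.const_mul (π ^ 2 / 6)
    have d6 := ((dl2.pow 2).mul (Real.hasDerivAt_log hy0.ne')).div_const 2
    have dd := ((((d1.add d2).add d3).sub d4).sub d5).add d6
    refine dd.congr_deriv ?_
    simp only [Pi.pow_apply]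
    rw [li2_landen ⟨hy0.le, by linarith⟩]
    have hrefl : Li2 (1 - y) = π ^ 2 / 6 - Li2 y - log y * log (1 - y) := by
      have := li2_reflection (x := y) ⟨hy0.le, by linarith⟩
      linarith
    rw [hrefl]
    field_simp
    ring
  have key : Li3 x + Li3 (1 - x) + Li3 (-x / (1 - x)) - (log (1 - x)) ^ 3 / 6
      - π ^ 2 / 6 * log (1 - x) + (log (1 - x)) ^ 2 * log x / 2 = Z := by
    rcases eq_or_lt_of_le hx.1 with h0 | h0
    · rw [← h0]; simpa using hf0
    · have key := eq_of_deriv_zero h0 (hcont.mono (Icc_subset_Icc le_rfl hx.2))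
        (fun y hy => hderiv y ⟨hy.1, lt_of_lt_of_le hy.2 hx.2⟩)
      rw [key]
      simpa using hf0
  linarith [key]

lemma li3_half : Li3 (1/2) = 7/8 * (∑' n : ℕ, 1 / ((n : ℝ) + 1) ^ 3)
    - π ^ 2 / 12 * log 2 + (log 2) ^ 3 / 6 := by
  have h := li3_landen (x := 1/2) (by norm_num)
  rw [show (1:ℝ) - 1/2 = 1/2 by norm_num, show -(1/2:ℝ) / (1/2) = -1 by norm_num,
    show ((1:ℝ)/2) = 2⁻¹ by norm_num, Real.log_inv] at h
  rw [li3_neg_one] at h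
  rw [show ((1:ℝ)/2) = 2⁻¹ by norm_num]
  linarith [h]

noncomputable def HH (x : ℝ) : ℝ :=
  log ((1 + x)/2) * Li2 ((1 - x)/2) + (log ((1 + x)/2))^2 * log ((1 - x)/2)
    + 2 * log ((1 + x)/2) * Li2 ((1 + x)/2) - 2 * Li3 ((1 + x)/2)

lemma tendsto_main_log : Tendsto (fun x : ℝ => (log ((1 + x)/2))^2 * log ((1 - x)/2))
    (𝓝[Icc (0:ℝ) 1] 1) (𝓝 0) := by
  apply squeeze_zero_norm' (a := fun x : ℝ => 2 * |((1 - x)/2) * log ((1 - x)/2)|)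
  · filter_upwards [self_mem_nhdsWithin] with x hx
    simp only [mem_Icc] at hx
    have hw0 : (0:ℝ) ≤ (1 - x)/2 := by linarith [hx.2]
    have hw2 : (1 - x)/2 ≤ 1/2 := by linarith [hx.1]
    have hb : |log ((1 + x)/2)| ≤ 2 * ((1 - x)/2) := by
      have h := abs_log_one_sub_le hw0 hw2
      rw [show (1:ℝ) - (1 - x)/2 = (1 + x)/2 by ring] at h
      exact h
    calc ‖(log ((1 + x)/2))^2 * log ((1 - x)/2)‖
        = |log ((1 + x)/2)|^2 * |log ((1 - x)/2)| := by rw [Real.norm_eq_abs, abs_mul, abs_pow]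
      _ ≤ (2 * ((1 - x)/2))^2 * |log ((1 - x)/2)| := by gcongr
      _ = (2 * ((1 - x)/2)) * (2 * (((1 - x)/2) * |log ((1 - x)/2)|)) := by ring
      _ ≤ 1 * (2 * (((1 - x)/2) * |log ((1 - x)/2)|)) := by
          have : ((1 - x)/2) * |log ((1 - x)/2)| ≥ 0 := by positivity
          nlinarith
      _ = 2 * |((1 - x)/2) * log ((1 - x)/2)| := by
          rw [abs_mul, abs_of_nonneg hw0]; ring
  · have hc : Continuous (fun x : ℝ => 2 * |((1 - x)/2) * log ((1 - x)/2)|) :=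
      continuous_const.mul ((continuous_mul_log.comp (by fun_prop)).abs)
    have h := (hc.tendsto 1).mono_left (nhdsWithin_le_nhds (s := Icc (0:ℝ) 1))
    simpa using h

lemma HH_contOn : ContinuousOn HH (Icc (0:ℝ) 1) := by
  have hlogv : ∀ z ∈ Icc (0:ℝ) 1, ContinuousWithinAt (fun x : ℝ => log ((1 + x)/2))
      (Icc (0:ℝ) 1) z := by
    intro z hz
    have h1 : ((1:ℝ) + z)/2 ≠ 0 := by
      simp only [mem_Icc] at hz
      intro h
      linarith [hz.1]
    have hc : ContinuousAt (fun x : ℝ => log ((1 + x)/2)) z :=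
      ContinuousAt.comp (g := log) (f := fun x : ℝ => (1 + x)/2)
        (Real.continuousAt_log h1) (by fun_prop)
    exact hc.continuousWithinAt
  have hmapw : ∀ x ∈ Icc (0:ℝ) 1, (1 - x)/2 ∈ Icc (-1:ℝ) 1 := by
    intro x hx
    simp only [mem_Icc] at hx ⊢
    constructor <;> linarith [hx.1, hx.2]
  have hmapv : ∀ x ∈ Icc (0:ℝ) 1, (1 + x)/2 ∈ Icc (-1:ℝ) 1 := by
    intro x hx
    simp only [mem_Icc] at hx ⊢
    constructor <;> linarith [hx.1, hx.2]
  unfold HH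
  apply ContinuousOn.sub
  apply ContinuousOn.add
  apply ContinuousOn.add
  · exact ContinuousOn.mul (fun z hz => hlogv z hz) (contOn_li2_comp (by fun_prop) hmapw)
  · intro z hz
    rcases eq_or_lt_of_le hz.2 with h1 | h1
    · rw [h1]
      unfold ContinuousWithinAt
      have h00 : (fun x : ℝ => (log ((1 + x)/2))^2 * log ((1 - x)/2)) 1 = 0 := by norm_num
      rw [h00]
      exact tendsto_main_log
    · have h2 : ((1:ℝ) - z)/2 ≠ 0 := by
        simp only [mem_Icc] at hz
        intro h
        linarith
      have hc : ContinuousAt (fun x : ℝ => log ((1 - x)/2)) z :=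
        ContinuousAt.comp (g := log) (f := fun x : ℝ => (1 - x)/2)
          (Real.continuousAt_log h2) (by fun_prop)
      exact ((hlogv z hz).pow 2).mul hc.continuousWithinAt
  · exact ContinuousOn.mul (continuousOn_const.mul (fun z hz => hlogv z hz))
      (contOn_li2_comp (by fun_prop) hmapv)
  · exact continuousOn_const.mul (contOn_li3_comp (by fun_prop) hmapv)

theorem stmt_10 :
    (∫ x in (0:ℝ)..1, (1 / (1 + x)) * Li2 ((1 - x) / 2))
      = Real.pi ^ 2 / 12 * Real.log 2 - (Real.log 2) ^ 3 / 6
        - (∑' n : ℕ, 1 / ((n : ℝ) + 1) ^ 3) / 4 := by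
  have hderiv : ∀ x ∈ Ioo (0:ℝ) 1, HasDerivAt HH ((1 / (1 + x)) * Li2 ((1 - x) / 2)) x := by
    intro x hx
    obtain ⟨hx0, hx1⟩ := hx
    have hv : (0:ℝ) < (1 + x)/2 := by linarith
    have hv1 : (1 + x)/2 < 1 := by linarith
    have hw : (0:ℝ) < (1 - x)/2 := by linarith
    have hw1 : (1 - x)/2 < 1 := by linarith
    have habsv : |(1 + x)/2| < 1 := by rw [abs_of_pos hv]; exact hv1
    have habsw : |(1 - x)/2| < 1 := by rw [abs_of_pos hw]; exact hw1
    have dv : HasDerivAt (fun x : ℝ => (1 + x)/2) (1/2) x := by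
      have := ((hasDerivAt_id x).const_add (1:ℝ)).div_const 2
      simpa using this
    have dw : HasDerivAt (fun x : ℝ => (1 - x)/2) (-(1/2)) x := by
      have := (hasDerivAt_one_sub x).div_const 2
      refine this.congr_deriv ?_
      norm_num
    have dlogv := (Real.hasDerivAt_log hv.ne').comp x dv
    have dlogw := (Real.hasDerivAt_log hw.ne').comp x dw
    have dLi2w := (li2_hasDerivAt habsw hw.ne').comp x dw
    have dLi2v := (li2_hasDerivAt habsv hv.ne').comp x dv
    have dLi3v := (li3_hasDerivAt habsv hv.ne').comp x dv
    have term1 := dlogv.mul dLi2w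
    have term2 := (dlogv.pow 2).mul dlogw
    have term3 := (dlogv.mul dLi2v).const_mul (2:ℝ)
    have term4 := dLi3v.const_mul (2:ℝ)
    have dd := ((term1.add term2).add term3).sub term4
    have hHH : HH = fun x : ℝ => log ((1 + x)/2) * Li2 ((1 - x)/2)
        + (log ((1 + x)/2))^2 * log ((1 - x)/2)
        + 2 * (log ((1 + x)/2) * Li2 ((1 + x)/2)) - 2 * Li3 ((1 + x)/2) := by
      funext y
      unfold HH
      ring
    rw [hHH]
    refine dd.congr_deriv ?_
    simp only [Function.comp_apply, Pi.pow_apply]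
    rw [show (1:ℝ) - (1 - x)/2 = (1 + x)/2 by ring, show (1:ℝ) - (1 + x)/2 = (1 - x)/2 by ring]
    have h2 : (1:ℝ) + x ≠ 0 := by linarith
    have h3 : (1:ℝ) - x ≠ 0 := by linarith
    field_simp
    ring
  have hint : IntervalIntegrable (fun x => (1 / (1 + x)) * Li2 ((1 - x) / 2))
      MeasureTheory.volume 0 1 := by
    apply ContinuousOn.intervalIntegrable
    rw [uIcc_of_le (by norm_num : (0:ℝ) ≤ 1)]
    apply ContinuousOn.mul
    · apply ContinuousOn.div continuousOn_const (by fun_prop)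
      intro x hx
      simp only [mem_Icc] at hx
      intro h; linarith [hx.1]
    · exact contOn_li2_comp (by fun_prop) (fun x hx => by
        simp only [mem_Icc] at hx ⊢; constructor <;> linarith [hx.1, hx.2])
  have hftc := intervalIntegral.integral_eq_sub_of_hasDeriv_right_of_le (by norm_num : (0:ℝ) ≤ 1)
    HH_contOn (fun x hx => (hderiv x hx).hasDerivWithinAt) hint
  rw [hftc]
  have hH1 : HH 1 = -2 * ∑' n : ℕ, 1 / ((n : ℝ) + 1) ^ 3 := by
    unfold HH
    norm_num [li2_zero, li2_one, li3_one]
  have hH0 : HH 0 = -3 * log 2 * Li2 (1/2) - (log 2)^3 - 2 * Li3 (1/2) := by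
    unfold HH
    norm_num
    rw [show ((1:ℝ)/2) = 2⁻¹ by norm_num, Real.log_inv]
    ring
  rw [hH1, hH0, li2_half, li3_half]
  ring
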